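/- Let Λ ⊂ ℂ be a lattice with ℤ-basis (ω₁, ω₂), Im(ω₁/ω₂) > 0, quasi-periods η₁ = η_Λ(ω₁), η₂ = η_Λ(ω₂), and covolume vol_Λ = Im(ω₁·conj(ω₂)). Let Q_Λ : ℂ → ℝ be the unique ℝ-quadratic form with Q_Λ(ω) = Re(ω·η_Λ(ω)) for all ω ∈ Λ, and write Q_Λ(z) = (C/2)z² + (C̄/2)z̄² + D·z·z̄ with C ∈ ℂ, D ∈ ℝ. Then D = π/vol_Λ and C = (η₁·conj(ω₂) − η₂·conj(ω₁))/(2i·vol_Λ). -/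

import Mathlib

open Complex

/-- The coefficients of the real quadratic form `Q_Λ(z) = (C/2)z² + (C̄/2)z̄² + D z z̄`
interpolating `ω ↦ Re(ω·η_Λ(ω))` on a lattice `Λ = ℤω₁ + ℤω₂` with `Im(ω₁/ω₂) > 0`,
quasi-periods `η₁, η₂` satisfying the Legendre relation, and covolume
`vol_Λ = Im(ω₁·conj(ω₂))`: one has `D = π/vol_Λ` and
`C = (η₁·conj(ω₂) − η₂·conj(ω₁))/(2i·vol_Λ)`. -/
theorem quadratic_form_coefficients (ω₁ ω₂ η₁ η₂ : ℂ) (him : 0 < (ω₁ / ω₂).im)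
    (hleg : η₂ * ω₁ - η₁ * ω₂ = 2 * Real.pi * Complex.I)
    (Q : ℂ → ℝ) (C : ℂ) (D : ℝ)
    (hQform : ∀ z : ℂ, (Q z : ℂ) =
      C / 2 * z ^ 2 + (starRingEnd ℂ) C / 2 * ((starRingEnd ℂ) z) ^ 2 +
        (D : ℂ) * z * (starRingEnd ℂ) z)
    (hQlat : ∀ m n : ℤ, Q ((m : ℂ) * ω₁ + (n : ℂ) * ω₂) =
      (((m : ℂ) * ω₁ + (n : ℂ) * ω₂) * ((m : ℂ) * η₁ + (n : ℂ) * η₂)).re) :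
    D = Real.pi / (ω₁ * (starRingEnd ℂ) ω₂).im ∧
    C = (η₁ * (starRingEnd ℂ) ω₂ - η₂ * (starRingEnd ℂ) ω₁) /
      (2 * Complex.I * ((ω₁ * (starRingEnd ℂ) ω₂).im : ℂ)) := by
  set a := (starRingEnd ℂ) ω₁ with ha
  set b := (starRingEnd ℂ) ω₂ with hb
  set p := (starRingEnd ℂ) η₁ with hp
  set q := (starRingEnd ℂ) η₂ with hq
  set c := (starRingEnd ℂ) C with hc
  have hω₂ : ω₂ ≠ 0 := by
    rintro rfl
    simp at him
  have hnsq : 0 < Complex.normSq ω₂ := Complex.normSq_pos.mpr hω₂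
  set vol : ℝ := (ω₁ * b).im with hvoldef
  have hkey : ω₁ * b = (ω₁ / ω₂) * (Complex.normSq ω₂ : ℂ) := by
    rw [hb, ← Complex.mul_conj]
    field_simp
  have hvol : 0 < vol := by
    rw [hvoldef, hkey]
    simp only [Complex.mul_im, Complex.ofReal_re, Complex.ofReal_im, mul_zero, zero_add]
    positivity
  have hvol0 : vol ≠ 0 := ne_of_gt hvol
  have hvolC : (vol : ℂ) ≠ 0 := by exact_mod_cast hvol0
  have hv : ω₁ * b - ω₂ * a = 2 * (vol : ℂ) * Complex.I := by
    have h := Complex.sub_conj (ω₁ * b)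
    have hcb : (starRingEnd ℂ) (ω₁ * b) = a * ω₂ := by
      rw [ha, hb, map_mul, Complex.conj_conj]
    push_cast at h
    rw [hvoldef]
    linear_combination h + hcb
  have hv0 : ω₁ * b - ω₂ * a ≠ 0 := by
    rw [hv]
    simp [hvolC, Complex.I_ne_zero]
  have hleg' : q * a - p * b = -(2 * (Real.pi : ℂ) * Complex.I) := by
    have h := congrArg (starRingEnd ℂ) hleg
    simp only [map_sub, map_mul, Complex.conj_I, Complex.conj_ofReal, map_ofNat] at h
    rw [hq, ha, hp, hb]
    linear_combination h
  have hre : ∀ w : ℂ, ((w.re : ℝ) : ℂ) = (w + (starRingEnd ℂ) w) / 2 := by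
    intro w
    rw [Complex.add_conj]
    push_cast
    ring
  have key : ∀ m n : ℤ, C / 2 * ((m : ℂ) * ω₁ + (n : ℂ) * ω₂) ^ 2
      + c / 2 * ((m : ℂ) * a + (n : ℂ) * b) ^ 2
      + (D : ℂ) * ((m : ℂ) * ω₁ + (n : ℂ) * ω₂) * ((m : ℂ) * a + (n : ℂ) * b)
      = (((m : ℂ) * ω₁ + (n : ℂ) * ω₂) * ((m : ℂ) * η₁ + (n : ℂ) * η₂)
          + ((m : ℂ) * a + (n : ℂ) * b) * ((m : ℂ) * p + (n : ℂ) * q)) / 2 := by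
    intro m n
    have h1 := hQform ((m : ℂ) * ω₁ + (n : ℂ) * ω₂)
    rw [hQlat m n, hre] at h1
    have hconj : (starRingEnd ℂ) ((m : ℂ) * ω₁ + (n : ℂ) * ω₂) = (m : ℂ) * a + (n : ℂ) * b := by
      simp [map_add, map_mul, ha, hb]
    have hconj2 : (starRingEnd ℂ) (((m : ℂ) * ω₁ + (n : ℂ) * ω₂) * ((m : ℂ) * η₁ + (n : ℂ) * η₂))
        = ((m : ℂ) * a + (n : ℂ) * b) * ((m : ℂ) * p + (n : ℂ) * q) := by
      simp [map_add, map_mul, ha, hb, hp, hq]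
    rw [hconj, hconj2] at h1
    linear_combination -h1
  have H1 := key 1 0
  have H2 := key 0 1
  have H3 := key 1 1
  push_cast at H1 H2 H3
  constructor
  · -- D = π / vol
    have hI : Complex.I ^ 2 = -1 := Complex.I_sq
    have hDv : (D : ℂ) * (ω₁ * b - ω₂ * a) ^ 2
        = 2 * (Real.pi : ℂ) * Complex.I * (ω₁ * b - ω₂ * a) := by
      linear_combination (-(ω₁*b) - ω₂*a - 2*ω₂*b) * H1 + (-(ω₁*b) - ω₂*a - 2*ω₁*a) * H2
        + (ω₁*b + ω₂*a) * H3 + ((ω₁*b - ω₂*a)/2) * hleg - ((ω₁*b - ω₂*a)/2) * hleg'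
    have h2 : (D : ℂ) * (2 * (vol : ℂ) * Complex.I) ^ 2
        = 2 * (Real.pi : ℂ) * Complex.I * (2 * (vol : ℂ) * Complex.I) := by
      rw [← hv]; exact hDv
    have h3 : (D : ℂ) * vol * (-4 * (vol : ℂ)) = (Real.pi : ℂ) * (-4 * (vol : ℂ)) := by
      linear_combination h2 + (-4*(D:ℂ)*(vol:ℂ)^2 + 4*(Real.pi:ℂ)*(vol:ℂ)) * hI
    have h4 : (D : ℂ) * vol = (Real.pi : ℂ) := by
      have hne : (-4 : ℂ) * (vol : ℂ) ≠ 0 := by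
        simp [hvolC]
      exact mul_right_cancel₀ hne h3
    have h5 : D * vol = Real.pi := by exact_mod_cast h4
    field_simp
    linarith [h5]
  · -- C
    have hCv0 : (ω₁ * b - ω₂ * a) * (C * (ω₁ * b - ω₂ * a) - (η₁ * b - η₂ * a)) = 0 := by
      linear_combination (2*b^2 + 2*a*b) * H1 + (2*a^2 + 2*a*b) * H2 - 2*a*b * H3
    have hCv : C * (ω₁ * b - ω₂ * a) = η₁ * b - η₂ * a := by
      rcases mul_eq_zero.mp hCv0 with h | h
      · exact absurd h hv0
      · linear_combination h
    rw [eq_div_iff]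
    · linear_combination hCv - C * hv
    · simp [hvolC, Complex.I_ne_zero]
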